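/- In any normed plane, equality c_R(‖·‖) + c_D(‖·‖) = 1 holds if and only if the supremum defining c_R is attained at a pair x,y ∈ S with x ⊣_B y. -/

import Mathlib

open Module

variable {V : Type*} [NormedAddCommGroup V] [NormedSpace ℝ V]

noncomputable def sine {V : Type*} [NormedAddCommGroup V] [NormedSpace ℝ V] (x y : V) : ℝ :=
  ⨅ t : ℝ, ‖x + t • y‖

def BOrth {V : Type*} [NormedAddCommGroup V] [NormedSpace ℝ V] (x y : V) : Prop :=
  ∀ t : ℝ, ‖x‖ ≤ ‖x + t • y‖

noncomputable def cD (V : Type*) [NormedAddCommGroup V] [NormedSpace ℝ V] : ℝ :=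
  sInf {r : ℝ | ∃ x y : V, ‖x‖ = 1 ∧ ‖y‖ = 1 ∧ BOrth x y ∧ r = sine y x}

noncomputable def cR (V : Type*) [NormedAddCommGroup V] [NormedSpace ℝ V] : ℝ :=
  sSup {r : ℝ | ∃ x y : V, ‖x‖ = 1 ∧ ‖y‖ = 1 ∧ r = |sine x y - sine y x|}

lemma sine_bddBelow (x y : V) : BddBelow (Set.range fun t : ℝ => ‖x + t • y‖) :=
  ⟨0, by rintro r ⟨t, rfl⟩; exact norm_nonneg _⟩

lemma sine_nonneg (x y : V) : 0 ≤ sine x y :=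
  le_ciInf fun _ => norm_nonneg _

lemma sine_le_norm (x y : V) : sine x y ≤ ‖x‖ := by
  have h := ciInf_le (sine_bddBelow x y) (0 : ℝ)
  exact (by simpa using h : ⨅ t : ℝ, ‖x + t • y‖ ≤ ‖x‖)

lemma BOrth.sine_eq {x y : V} (h : BOrth x y) : sine x y = ‖x‖ :=
  le_antisymm (sine_le_norm x y) (le_ciInf h)

lemma sine_sub_le {x y x' y' : V} (hx : ‖x‖ = 1) (hy : ‖y‖ = 1) :
    sine x' y' ≤ sine x y + ‖x' - x‖ + 3 * ‖y' - y‖ := by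
  refine le_of_forall_pos_le_add fun ε hε => ?_
  set δ := min ε 1 with hδdef
  have hδ0 : 0 < δ := lt_min hε one_pos
  have hδ1 : δ ≤ 1 := min_le_right _ _
  have hδε : δ ≤ ε := min_le_left _ _
  have h1 : sine x y < sine x y + δ := by linarith
  obtain ⟨t, ht⟩ := exists_lt_of_ciInf_lt h1
  have hs1 : sine x y ≤ 1 := by simpa [hx] using sine_le_norm x y
  have htb : |t| ≤ 3 := by
    have h2 : ‖t • y‖ ≤ ‖x + t • y‖ + ‖x‖ := by
      have := norm_sub_le (x + t • y) x
      simpa using this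
    rw [norm_smul, hy, Real.norm_eq_abs, mul_one, hx] at h2
    linarith
  have key : ‖x' + t • y'‖ ≤ ‖x + t • y‖ + ‖x' - x‖ + |t| * ‖y' - y‖ := by
    have heq : x' + t • y' = (x + t • y) + (x' - x) + t • (y' - y) := by module
    rw [heq]
    calc ‖(x + t • y) + (x' - x) + t • (y' - y)‖
        ≤ ‖(x + t • y) + (x' - x)‖ + ‖t • (y' - y)‖ := norm_add_le _ _
      _ ≤ ‖x + t • y‖ + ‖x' - x‖ + ‖t • (y' - y)‖ := by
          gcongr; exact norm_add_le _ _
      _ = ‖x + t • y‖ + ‖x' - x‖ + |t| * ‖y' - y‖ := by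
          rw [norm_smul, Real.norm_eq_abs]
  have hsle : sine x' y' ≤ ‖x' + t • y'‖ := ciInf_le (sine_bddBelow x' y') t
  have habs : |t| * ‖y' - y‖ ≤ 3 * ‖y' - y‖ :=
    mul_le_mul_of_nonneg_right htb (norm_nonneg _)
  linarith

lemma exists_orth (hV : finrank ℝ V = 2) : ∃ x y : V, ‖x‖ = 1 ∧ ‖y‖ = 1 ∧ BOrth x y := by
  have hfin : FiniteDimensional ℝ V := Module.finite_of_finrank_eq_succ hV
  have hnt : Nontrivial V := Module.nontrivial_of_finrank_eq_succ hV
  obtain ⟨y, hy⟩ : ∃ y : V, ‖y‖ = 1 := exists_norm_eq V (le_of_lt one_pos)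
  have hy0 : y ≠ 0 := by intro h; rw [h, norm_zero] at hy; norm_num at hy
  obtain ⟨u, hu⟩ : ∃ u : V, u ∉ Submodule.span ℝ {y} := by
    by_contra h
    push_neg at h
    have htop : (Submodule.span ℝ {y} : Submodule ℝ V) = ⊤ :=
      Submodule.eq_top_iff'.2 h
    have h1 : finrank ℝ (Submodule.span ℝ {y} : Submodule ℝ V) = 1 :=
      finrank_span_singleton hy0
    rw [htop, finrank_top, hV] at h1
    norm_num at h1
  set g : ℝ → ℝ := fun t => ‖u + t • y‖ with hg
  have hgc : Continuous g := by
    apply Continuous.norm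
    exact continuous_const.add (continuous_id.smul continuous_const)
  set R : ℝ := 2 * ‖u‖ + 1 with hR
  have hR0 : 0 < R := by positivity
  have h0mem : (0 : ℝ) ∈ Set.Icc (-R) R := ⟨by linarith, by linarith⟩
  obtain ⟨t₀, ht₀mem, ht₀⟩ := (isCompact_Icc (a := -R) (b := R)).exists_isMinOn
    ⟨0, h0mem⟩ hgc.continuousOn
  have hmin : ∀ s : ℝ, g t₀ ≤ g s := by
    intro s
    by_cases hs : s ∈ Set.Icc (-R) R
    · exact ht₀ hs
    · have habs : R < |s| := by
        rcases abs_cases s with ⟨h1, _⟩ | ⟨h1, _⟩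
        · rw [h1]; rcases not_and_or.1 hs with h | h <;> push_neg at h <;> linarith
        · rw [h1]; rcases not_and_or.1 hs with h | h <;> push_neg at h <;> linarith
      have hlb : |s| - ‖u‖ ≤ g s := by
        have h2 : ‖s • y‖ ≤ ‖u + s • y‖ + ‖u‖ := by
          have := norm_sub_le (u + s • y) u
          simpa using this
        rw [norm_smul, hy, Real.norm_eq_abs, mul_one] at h2
        simpa [hg] using by linarith
      have : g t₀ ≤ g 0 := ht₀ h0mem
      have hg0 : g 0 = ‖u‖ := by simp [hg]
      have : g t₀ ≤ ‖u‖ := by rw [hg0] at this; exact this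
      linarith
  set z : V := u + t₀ • y with hz
  have hz0 : z ≠ 0 := by
    intro h
    apply hu
    rw [Submodule.mem_span_singleton]
    refine ⟨-t₀, ?_⟩
    have : u = -(t₀ • y) := by
      rw [hz] at h
      linear_combination (norm := module) h
    rw [this, neg_smul]
  have hzn : 0 < ‖z‖ := norm_pos_iff.mpr hz0
  refine ⟨‖z‖⁻¹ • z, y, ?_, hy, ?_⟩
  · rw [norm_smul, Real.norm_eq_abs, abs_of_pos (inv_pos.2 hzn), inv_mul_cancel₀ hzn.ne']
  · intro t
    have hx1 : ‖‖z‖⁻¹ • z‖ = 1 := by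
      rw [norm_smul, Real.norm_eq_abs, abs_of_pos (inv_pos.2 hzn), inv_mul_cancel₀ hzn.ne']
    rw [hx1]
    have heq : ‖z‖⁻¹ • z + t • y = ‖z‖⁻¹ • (z + (t * ‖z‖) • y) := by
      have hmul : ‖z‖⁻¹ * (t * ‖z‖) = t := by
        rw [mul_comm t, ← mul_assoc, inv_mul_cancel₀ hzn.ne', one_mul]
      conv_rhs => rw [smul_add, smul_smul, hmul]
    rw [heq, norm_smul, Real.norm_eq_abs, abs_of_pos (inv_pos.2 hzn)]
    have hzle : ‖z‖ ≤ ‖z + (t * ‖z‖) • y‖ := by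
      have := hmin (t₀ + t * ‖z‖)
      have heq2 : u + (t₀ + t * ‖z‖) • y = z + (t * ‖z‖) • y := by
        rw [hz]; module
      simpa [hg, heq2] using this
    calc (1 : ℝ) = ‖z‖⁻¹ * ‖z‖ := (inv_mul_cancel₀ hzn.ne').symm
      _ ≤ ‖z‖⁻¹ * ‖z + (t * ‖z‖) • y‖ := by gcongr

lemma cD_attained (hV : finrank ℝ V = 2) :
    ∃ x y : V, ‖x‖ = 1 ∧ ‖y‖ = 1 ∧ BOrth x y ∧ cD V = sine y x := by
  have hfin : FiniteDimensional ℝ V := Module.finite_of_finrank_eq_succ hV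
  set O : Set (V × V) := {p : V × V | ‖p.1‖ = 1 ∧ ‖p.2‖ = 1 ∧ BOrth p.1 p.2} with hO
  have hOne : O.Nonempty := by
    obtain ⟨x, y, hx, hy, hxy⟩ := exists_orth hV
    exact ⟨(x, y), hx, hy, hxy⟩
  have hOclosed : IsClosed O := by
    have h1 : IsClosed {p : V × V | ‖p.1‖ = 1} :=
      isClosed_eq (continuous_fst.norm) continuous_const
    have h2 : IsClosed {p : V × V | ‖p.2‖ = 1} :=
      isClosed_eq (continuous_snd.norm) continuous_const
    have h3 : IsClosed {p : V × V | BOrth p.1 p.2} := by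
      have : {p : V × V | BOrth p.1 p.2} = ⋂ t : ℝ, {p : V × V | ‖p.1‖ ≤ ‖p.1 + t • p.2‖} := by
        ext p; simp [BOrth]
      rw [this]
      exact isClosed_iInter fun t => isClosed_le continuous_fst.norm
        (continuous_fst.add (continuous_snd.const_smul t)).norm
    have : O = {p : V × V | ‖p.1‖ = 1} ∩ ({p : V × V | ‖p.2‖ = 1} ∩ {p : V × V | BOrth p.1 p.2}) := by
      ext p; simp [hO, Set.mem_setOf_eq, and_assoc]
    rw [this]
    exact h1.inter (h2.inter h3)
  have hOcompact : IsCompact O := by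
    have hsub : O ⊆ (Metric.closedBall (0 : V) 1) ×ˢ (Metric.closedBall (0 : V) 1) := by
      rintro ⟨x, y⟩ ⟨hx, hy, -⟩
      constructor <;> simp_all [Metric.mem_closedBall, dist_eq_norm]
    exact ((isCompact_closedBall (0 : V) 1).prod (isCompact_closedBall (0 : V) 1)).of_isClosed_subset
      hOclosed hsub
  have hcont : ContinuousOn (fun p : V × V => sine p.2 p.1) O := by
    rw [Metric.continuousOn_iff]
    intro p hp ε hε
    refine ⟨ε / 5, by positivity, fun q hq hd => ?_⟩
    have hd1 : dist q.1 p.1 < ε / 5 := lt_of_le_of_lt (by rw [Prod.dist_eq]; exact le_max_left _ _) hd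
    have hd2 : dist q.2 p.2 < ε / 5 := lt_of_le_of_lt (by rw [Prod.dist_eq]; exact le_max_right _ _) hd
    rw [dist_eq_norm] at hd1 hd2
    have h1 : sine q.2 q.1 ≤ sine p.2 p.1 + ‖q.2 - p.2‖ + 3 * ‖q.1 - p.1‖ :=
      sine_sub_le hp.2.1 hp.1
    have h2 : sine p.2 p.1 ≤ sine q.2 q.1 + ‖p.2 - q.2‖ + 3 * ‖p.1 - q.1‖ :=
      sine_sub_le hq.2.1 hq.1
    rw [← norm_neg (p.2 - q.2), neg_sub] at h2
    rw [← norm_neg (p.1 - q.1), neg_sub] at h2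
    rw [Real.dist_eq, abs_sub_lt_iff]
    constructor <;> linarith
  obtain ⟨p₀, hp₀mem, hp₀⟩ := hOcompact.exists_isMinOn hOne hcont
  refine ⟨p₀.1, p₀.2, hp₀mem.1, hp₀mem.2.1, hp₀mem.2.2, ?_⟩
  apply le_antisymm
  · exact csInf_le ⟨0, by rintro r ⟨x, y, hx, hy, hxy, rfl⟩; exact sine_nonneg y x⟩
      ⟨p₀.1, p₀.2, hp₀mem.1, hp₀mem.2.1, hp₀mem.2.2, rfl⟩
  · have hne : {r : ℝ | ∃ x y : V, ‖x‖ = 1 ∧ ‖y‖ = 1 ∧ BOrth x y ∧ r = sine y x}.Nonempty :=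
      ⟨sine p₀.2 p₀.1, p₀.1, p₀.2, hp₀mem.1, hp₀mem.2.1, hp₀mem.2.2, rfl⟩
    apply le_csInf hne
    rintro r ⟨x, y, hx, hy, hxy, rfl⟩
    exact hp₀ (show (x, y) ∈ O from ⟨hx, hy, hxy⟩)

theorem cR_add_cD_eq_one_iff (hV : finrank ℝ V = 2) :
    cR V + cD V = 1 ↔
      ∃ x y : V, ‖x‖ = 1 ∧ ‖y‖ = 1 ∧ BOrth x y ∧ cR V = |sine x y - sine y x| := by
  have hBA : BddAbove {r : ℝ | ∃ x y : V, ‖x‖ = 1 ∧ ‖y‖ = 1 ∧ r = |sine x y - sine y x|} := by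
    refine ⟨1, ?_⟩
    rintro r ⟨x, y, hx, hy, rfl⟩
    have h1 := sine_nonneg x y
    have h2 := sine_nonneg y x
    have h3 : sine x y ≤ 1 := by simpa [hx] using sine_le_norm x y
    have h4 : sine y x ≤ 1 := by simpa [hy] using sine_le_norm y x
    rw [abs_le]; constructor <;> linarith
  have hBB : BddBelow {r : ℝ | ∃ x y : V, ‖x‖ = 1 ∧ ‖y‖ = 1 ∧ BOrth x y ∧ r = sine y x} :=
    ⟨0, by rintro r ⟨x, y, hx, hy, hxy, rfl⟩; exact sine_nonneg y x⟩
  constructor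
  · intro h
    obtain ⟨a, b, ha, hb, hab, hmin⟩ := cD_attained hV
    refine ⟨a, b, ha, hb, hab, ?_⟩
    have hsab : sine a b = 1 := by rw [hab.sine_eq, ha]
    have h1 : sine b a ≤ 1 := by simpa [hb] using sine_le_norm b a
    have h0 : 0 ≤ sine b a := sine_nonneg b a
    rw [hsab, ← hmin, abs_of_nonneg (by linarith : (0:ℝ) ≤ 1 - cD V)]
    linarith
  · rintro ⟨x, y, hx, hy, hxy, hcr⟩
    have hs1 : sine x y = 1 := by rw [hxy.sine_eq, hx]
    have h0 : 0 ≤ sine y x := sine_nonneg y x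
    have h1 : sine y x ≤ 1 := by simpa [hy] using sine_le_norm y x
    have hcr' : cR V = 1 - sine y x := by
      rw [hcr, hs1, abs_of_nonneg (by linarith : (0:ℝ) ≤ 1 - sine y x)]
    have hcd_le : cD V ≤ sine y x := csInf_le hBB ⟨x, y, hx, hy, hxy, rfl⟩
    have hge : 1 - cR V ≤ cD V := by
      have hne : {r : ℝ | ∃ x y : V, ‖x‖ = 1 ∧ ‖y‖ = 1 ∧ BOrth x y ∧ r = sine y x}.Nonempty :=
        ⟨sine y x, x, y, hx, hy, hxy, rfl⟩
      apply le_csInf hne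
      rintro r ⟨p, q, hp, hq, hpq, rfl⟩
      have hspq : sine p q = 1 := by rw [hpq.sine_eq, hp]
      have hq0 : 0 ≤ sine q p := sine_nonneg q p
      have hq1 : sine q p ≤ 1 := by simpa [hq] using sine_le_norm q p
      have hmem : 1 - sine q p ∈ {r : ℝ | ∃ x y : V, ‖x‖ = 1 ∧ ‖y‖ = 1 ∧ r = |sine x y - sine y x|} :=
        ⟨p, q, hp, hq, by rw [hspq, abs_of_nonneg (by linarith : (0:ℝ) ≤ 1 - sine q p)]⟩
      have hle : 1 - sine q p ≤ cR V := le_csSup hBA hmem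
      linarith
    linarith
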